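/- arXiv:1802.09242 — 3 statements merged into one kernel-verified Lean document; each statement's English description precedes it below -/
import Mathlib

section
/- Let T > 0 and let φ : [0,T] → ℝ be Lebesgue integrable. Then for every θ ∈ [0,1] there exists a Lebesgue-measurable set E ⊆ [0,T] with Lebesgue measure equal to θ·T such that ∫_E φ(t) dt = θ · ∫_0^T φ(t) dt. -/
open MeasureTheory

set_option maxHeartbeats 1000000 in
/-- Spike-variation set: for an integrable `φ` on `[0,T]` and `θ ∈ [0,1]`, there exists a
measurable `E ⊆ [0,T]` of Lebesgue measure `θ·T` with `∫_E φ = θ·∫_0^T φ`. -/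
theorem exists_spike_variation_set
    (T : ℝ) (hT : 0 < T) (φ : ℝ → ℝ)
    (hφ : IntegrableOn φ (Set.Icc 0 T) volume)
    (θ : ℝ) (hθ : θ ∈ Set.Icc (0 : ℝ) 1) :
    ∃ E : Set ℝ, E ⊆ Set.Icc 0 T ∧ MeasurableSet E ∧
      volume E = ENNReal.ofReal (θ * T) ∧
      ∫ t in E, φ t = θ * ∫ t in Set.Icc 0 T, φ t := by
  obtain ⟨hθ0, hθ1⟩ := hθ
  set c : ℝ := θ * T with hc
  have hc0 : 0 ≤ c := mul_nonneg hθ0 hT.le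
  have hcT : c ≤ T := by nlinarith
  set φ₀ : ℝ → ℝ := (Set.Ioc 0 T).indicator φ with hφ₀def
  have hφ₀int : Integrable φ₀ volume := by
    rw [hφ₀def, integrable_indicator_iff measurableSet_Ioc]
    exact hφ.mono_set Set.Ioc_subset_Icc_self
  have hII : ∀ a b : ℝ, IntervalIntegrable φ₀ volume a b :=
    fun a b => hφ₀int.intervalIntegrable
  set G : ℝ → ℝ := fun y => ∫ t in (0:ℝ)..y, φ₀ t with hGdef
  have hGcont : Continuous G := intervalIntegral.continuous_primitive hII 0
  have hGint : ∀ a b : ℝ, IntervalIntegrable G volume a b :=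
    fun a b => hGcont.intervalIntegrable a b
  -- G vanishes on nonpositive reals
  have hGzero : ∀ z : ℝ, z ≤ 0 → G z = 0 := by
    intro z hz
    have h0 : (∫ t in z..(0:ℝ), φ₀ t) = 0 := by
      have : (∫ t in z..(0:ℝ), φ₀ t) = ∫ t in z..(0:ℝ), (0:ℝ) := by
        apply intervalIntegral.integral_congr
        intro t ht
        rw [Set.uIcc_of_le hz] at ht
        have : t ∉ Set.Ioc (0:ℝ) T := fun h => absurd (lt_of_lt_of_le h.1 ht.2) (lt_irrefl 0)
        simp [hφ₀def, Set.indicator_of_notMem this]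
      rw [this]; simp
    simp only [hGdef]
    rw [intervalIntegral.integral_symm z 0, h0, neg_zero]
  set I : ℝ := ∫ t in Set.Icc 0 T, φ t with hIdef
  -- Integrals over subintervals of [0,T] in terms of G
  have hIccG : ∀ a b : ℝ, 0 ≤ a → a ≤ b → b ≤ T →
      (∫ t in Set.Icc a b, φ t) = G b - G a := by
    intro a b ha hab hbT
    rw [integral_Icc_eq_integral_Ioc]
    have h1 : (∫ t in Set.Ioc a b, φ t) = ∫ t in Set.Ioc a b, φ₀ t := by
      apply setIntegral_congr_fun measurableSet_Ioc
      intro t ht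
      have : t ∈ Set.Ioc (0:ℝ) T := ⟨lt_of_le_of_lt ha ht.1, le_trans ht.2 hbT⟩
      simp [hφ₀def, Set.indicator_of_mem this]
    rw [h1]
    have h2 : (∫ t in Set.Ioc a b, φ₀ t) = ∫ t in a..b, φ₀ t :=
      (intervalIntegral.integral_of_le hab).symm
    rw [h2, hGdef]
    exact (intervalIntegral.integral_interval_sub_left (hII 0 b) (hII 0 a)).symm
  have hGT : G T = I := by
    have := hIccG 0 T le_rfl hT.le le_rfl
    rw [hGzero 0 le_rfl, sub_zero] at this
    exact this.symm
  have hIcoG : ∀ b : ℝ, b ≤ T → (∫ t in Set.Ico 0 b, φ t) = G b := by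
    intro b hbT
    rcases le_or_gt b 0 with hb | hb
    · rw [Set.Ico_eq_empty (by exact fun h => absurd (lt_of_lt_of_le h hb) (lt_irrefl 0)),
        hGzero b hb]
      simp
    · rw [integral_Ico_eq_integral_Ioo, ← integral_Ioc_eq_integral_Ioo]
      have h1 : (∫ t in Set.Ioc 0 b, φ t) = ∫ t in Set.Ioc 0 b, φ₀ t := by
        apply setIntegral_congr_fun measurableSet_Ioc
        intro t ht
        have : t ∈ Set.Ioc (0:ℝ) T := ⟨ht.1, le_trans ht.2 hbT⟩
        simp [hφ₀def, Set.indicator_of_mem this]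
      rw [h1]
      exact (intervalIntegral.integral_of_le hb.le).symm
  -- the sliding window and its integral
  set H : ℝ → ℝ := fun x => G (min (x + c) T) + G (x + c - T) - G x with hHdef
  have hHcont : Continuous H := by
    apply Continuous.sub (Continuous.add ?_ ?_) hGcont
    · exact hGcont.comp ((continuous_id.add continuous_const).min continuous_const)
    · exact hGcont.comp ((continuous_id.add continuous_const).sub continuous_const)
  have hi1 : ∀ a b : ℝ, IntervalIntegrable (fun x => G (min (x + c) T)) volume a b :=
    fun a b => (hGcont.comp
      ((continuous_id.add continuous_const).min continuous_const)).intervalIntegrable a b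
  have hi2 : ∀ a b : ℝ, IntervalIntegrable (fun x => G (x + c - T)) volume a b :=
    fun a b => (hGcont.comp
      ((continuous_id.add continuous_const).sub continuous_const)).intervalIntegrable a b
  have hdisj : ∀ x : ℝ, Disjoint (Set.Icc x (min (x + c) T)) (Set.Ico 0 (x + c - T)) := by
    intro x
    rw [Set.disjoint_left]
    rintro a ⟨ha1, _⟩ ⟨_, ha4⟩
    have : x + c - T ≤ x := by linarith
    linarith
  have hsub : ∀ x : ℝ, x ∈ Set.Icc 0 T →
      Set.Icc x (min (x + c) T) ∪ Set.Ico 0 (x + c - T) ⊆ Set.Icc 0 T := by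
    rintro x ⟨hx0, hxT⟩ a (⟨h1, h2⟩ | ⟨h1, h2⟩)
    · exact ⟨le_trans hx0 h1, le_trans h2 (min_le_right _ _)⟩
    · exact ⟨h1, by linarith [h2]⟩
  have hHint : ∀ x : ℝ, x ∈ Set.Icc 0 T →
      (∫ t in (Set.Icc x (min (x + c) T) ∪ Set.Ico 0 (x + c - T)), φ t) = H x := by
    rintro x ⟨hx0, hxT⟩
    rw [setIntegral_union (hdisj x) measurableSet_Ico
      (hφ.mono_set (fun a ha => (hsub x ⟨hx0, hxT⟩) (Or.inl ha)))
      (hφ.mono_set (fun a ha => (hsub x ⟨hx0, hxT⟩) (Or.inr ha)))]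
    have hxm : x ≤ min (x + c) T := le_min (by linarith) hxT
    rw [hIccG x (min (x + c) T) hx0 hxm (min_le_right _ _),
      hIcoG (x + c - T) (by linarith)]
    simp only [hHdef]
    ring
  -- volume of the window
  have hHvol : ∀ x : ℝ, x ∈ Set.Icc 0 T →
      volume (Set.Icc x (min (x + c) T) ∪ Set.Ico 0 (x + c - T))
        = ENNReal.ofReal c := by
    rintro x ⟨hx0, hxT⟩
    rw [measure_union (hdisj x) measurableSet_Ico, Real.volume_Icc, Real.volume_Ico]
    rcases le_or_gt (x + c) T with h | h
    · rw [min_eq_left h]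
      have : ENNReal.ofReal (x + c - T - 0) = 0 := by
        rw [ENNReal.ofReal_eq_zero]; linarith
      rw [this, add_zero]
      congr 1; ring
    · rw [min_eq_right h.le, ← ENNReal.ofReal_add (by linarith) (by linarith)]
      congr 1; ring
  -- the average of H over [0,T] is c * I
  have hkey : (∫ x in (0:ℝ)..T, H x) = c * I := by
    have hsplit : (∫ x in (0:ℝ)..T, H x)
        = (∫ x in (0:ℝ)..T, G (min (x + c) T)) + (∫ x in (0:ℝ)..T, G (x + c - T))
          - ∫ x in (0:ℝ)..T, G x := by
      rw [hHdef, ← intervalIntegral.integral_add (hi1 0 T) (hi2 0 T),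
        ← intervalIntegral.integral_sub ((hi1 0 T).add (hi2 0 T)) (hGint 0 T)]
    rw [hsplit]
    -- term 2
    have ht2 : (∫ x in (0:ℝ)..T, G (x + c - T)) = ∫ y in (0:ℝ)..c, G y := by
      have e0 : (∫ x in (0:ℝ)..T, G (x + c - T)) = ∫ x in (0:ℝ)..T, G (x + (c - T)) := by
        apply intervalIntegral.integral_congr
        intro t _
        show G (t + c - T) = G (t + (c - T))
        have ht' : t + c - T = t + (c - T) := by ring
        rw [ht']
      rw [e0, intervalIntegral.integral_comp_add_right (a := (0:ℝ)) (b := T) (f := G) (c - T)]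
      have hb1 : (0:ℝ) + (c - T) = c - T := by ring
      have hb2 : T + (c - T) = c := by ring
      rw [hb1, hb2]
      have hadj : (∫ y in (c - T)..(0:ℝ), G y) + (∫ y in (0:ℝ)..c, G y)
          = ∫ y in (c - T)..c, G y :=
        intervalIntegral.integral_add_adjacent_intervals (hGint _ _) (hGint _ _)
      have hzero : (∫ y in (c - T)..(0:ℝ), G y) = 0 := by
        have : (∫ y in (c - T)..(0:ℝ), G y) = ∫ y in (c - T)..(0:ℝ), (0:ℝ) := by
          apply intervalIntegral.integral_congr
          intro t ht
          rw [Set.uIcc_of_le (by linarith : c - T ≤ 0)] at ht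
          show G t = 0
          exact hGzero t ht.2
        rw [this]; simp
      rw [← hadj, hzero, zero_add]
    -- term 3
    have ht3 : (∫ x in (0:ℝ)..T, G x) = (∫ x in (0:ℝ)..c, G x) + ∫ x in c..T, G x :=
      (intervalIntegral.integral_add_adjacent_intervals (hGint _ _) (hGint _ _)).symm
    -- term 1
    have ht1 : (∫ x in (0:ℝ)..T, G (min (x + c) T)) = (∫ x in c..T, G x) + c * I := by
      have hadj : (∫ x in (0:ℝ)..(T - c), G (min (x + c) T))
            + (∫ x in (T - c)..T, G (min (x + c) T))
          = ∫ x in (0:ℝ)..T, G (min (x + c) T) :=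
        intervalIntegral.integral_add_adjacent_intervals (hi1 _ _) (hi1 _ _)
      have e1 : (∫ x in (0:ℝ)..(T - c), G (min (x + c) T))
          = ∫ x in (0:ℝ)..(T - c), G (x + c) := by
        apply intervalIntegral.integral_congr
        intro t ht
        rw [Set.uIcc_of_le (by linarith : (0:ℝ) ≤ T - c)] at ht
        show G (min (t + c) T) = G (t + c)
        rw [min_eq_left (by linarith [ht.2] : t + c ≤ T)]
      have e1' : (∫ x in (0:ℝ)..(T - c), G (x + c)) = ∫ x in c..T, G x := by
        rw [intervalIntegral.integral_comp_add_right (a := (0:ℝ)) (b := T - c) (f := G) c]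
        have hb1 : (0:ℝ) + c = c := by ring
        have hb2 : T - c + c = T := by ring
        rw [hb1, hb2]
      have e2 : (∫ x in (T - c)..T, G (min (x + c) T)) = ∫ x in (T - c)..T, G T := by
        apply intervalIntegral.integral_congr
        intro t ht
        rw [Set.uIcc_of_le (by linarith : T - c ≤ T)] at ht
        show G (min (t + c) T) = G T
        rw [min_eq_right (by linarith [ht.1] : T ≤ t + c)]
      have e2' : (∫ x in (T - c)..T, G T) = c * I := by
        rw [intervalIntegral.integral_const, hGT]
        rw [smul_eq_mul]
        ring_nf
      rw [← hadj, e1, e1', e2, e2']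
    rw [ht1, ht2, ht3]; ring
  -- min and max of H on [0,T]
  obtain ⟨x₁, hx₁mem, hx₁⟩ := isCompact_Icc.exists_isMinOn (Set.nonempty_Icc.mpr hT.le)
    (hHcont.continuousOn (s := Set.Icc 0 T))
  obtain ⟨x₂, hx₂mem, hx₂⟩ := isCompact_Icc.exists_isMaxOn (Set.nonempty_Icc.mpr hT.le)
    (hHcont.continuousOn (s := Set.Icc 0 T))
  have hHi : IntervalIntegrable H volume 0 T := hHcont.intervalIntegrable 0 T
  have hlow : T * H x₁ ≤ c * I := by
    have : (∫ x in (0:ℝ)..T, H x₁) ≤ ∫ x in (0:ℝ)..T, H x :=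
      intervalIntegral.integral_mono_on hT.le intervalIntegrable_const hHi
        (fun x hx => hx₁ hx)
    rw [intervalIntegral.integral_const, hkey] at this
    simpa [smul_eq_mul, mul_comm] using this
  have hhigh : c * I ≤ T * H x₂ := by
    have : (∫ x in (0:ℝ)..T, H x) ≤ ∫ x in (0:ℝ)..T, H x₂ :=
      intervalIntegral.integral_mono_on hT.le hHi intervalIntegrable_const
        (fun x hx => hx₂ hx)
    rw [intervalIntegral.integral_const, hkey] at this
    simpa [smul_eq_mul, mul_comm] using this
  have hθI1 : H x₁ ≤ θ * I := by
    have h : T * H x₁ ≤ T * (θ * I) := by rw [hc] at hlow; nlinarith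
    exact le_of_mul_le_mul_left h hT
  have hθI2 : θ * I ≤ H x₂ := by
    have h : T * (θ * I) ≤ T * H x₂ := by rw [hc] at hhigh; nlinarith
    exact le_of_mul_le_mul_left h hT
  -- IVT
  have hIvt := intermediate_value_uIcc (a := x₁) (b := x₂) (f := H) hHcont.continuousOn
  have hmem : θ * I ∈ Set.uIcc (H x₁) (H x₂) := Set.mem_uIcc.mpr (Or.inl ⟨hθI1, hθI2⟩)
  obtain ⟨x, hxmem, hxval⟩ := hIvt hmem
  have hxIcc : x ∈ Set.Icc 0 T :=
    (Set.ordConnected_Icc.uIcc_subset hx₁mem hx₂mem) hxmem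
  refine ⟨Set.Icc x (min (x + c) T) ∪ Set.Ico 0 (x + c - T),
    hsub x hxIcc, measurableSet_Icc.union measurableSet_Ico, hHvol x hxIcc, ?_⟩
  rw [hHint x hxIcc, hxval, hIdef]
end

section
/- Let T > 0, let k be a positive integer, and let φ_1, …, φ_k : [0,T] → ℝ be Lebesgue integrable functions. Then for every θ ∈ [0,1] there exists a Lebesgue-measurable set E ⊆ [0,T] with Lebesgue measure equal to θ·T such that ∫_E φ_i(t) dt = θ · ∫_0^T φ_i(t) dt for every i = 1, …, k. -/
open MeasureTheory Set Filter Topology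

namespace SpikeVar

variable {μ : Measure ℝ} [IsFiniteMeasure μ]

/-- real measure difference -/
lemma mreal_diff (B C : Set ℝ) (hC : MeasurableSet C) (hCB : C ⊆ B) :
    (μ (B \ C)).toReal = (μ B).toReal - (μ C).toReal := by
  rw [measure_diff hCB hC.nullMeasurableSet (measure_ne_top μ C)]
  rw [ENNReal.toReal_sub_of_le (measure_mono hCB) (measure_ne_top μ B)]

lemma mreal_union {B C : Set ℝ} (hC : MeasurableSet C) (hd : Disjoint B C) :
    (μ (B ∪ C)).toReal = (μ B).toReal + (μ C).toReal := by
  rw [measure_union hd hC, ENNReal.toReal_add (measure_ne_top μ B) (measure_ne_top μ C)]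

/-- If the real measure equals full, the set is almost all of it. -/
lemma integral_eq_of_mreal_eq {A B : Set ℝ} (hB : MeasurableSet B) (hBA : B ⊆ A)
    (h : (μ B).toReal = (μ A).toReal) (f : ℝ → ℝ) (hf : Integrable f μ) :
    ∫ x in B, f x ∂μ = ∫ x in A, f x ∂μ := by
  have h0 : μ (A \ B) = 0 := by
    have := mreal_diff (μ := μ) A B hB hBA
    rw [h, sub_self] at this
    exact (ENNReal.toReal_eq_zero_iff _).mp this |>.resolve_right (measure_ne_top μ _)
  have : ∫ x in A \ B, f x ∂μ = 0 := by
    rw [Measure.restrict_eq_zero.mpr h0, integral_zero_measure]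
  have hdiff := integral_diff hB (hf.integrableOn) hBA
  linarith [hdiff]


lemma cont_family {A : Set ℝ} (F : ℝ → Set ℝ)
    (hFm : ∀ t, MeasurableSet (F t))
    (hmono : MonotoneOn F (Icc 0 1))
    (hval : ∀ t ∈ Icc (0:ℝ) 1, (μ (F t)).toReal = t * (μ A).toReal)
    {f : ℝ → ℝ} (hf : Integrable f μ) :
    ContinuousOn (fun t => ∫ x in F t, f x ∂μ) (Icc 0 1) := by
  intro t₀ ht₀
  have key : ∀ s t, s ∈ Icc (0:ℝ) 1 → t ∈ Icc (0:ℝ) 1 → s ≤ t →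
      μ (F t \ F s) ≤ ENNReal.ofReal ((t - s) * (μ A).toReal) := by
    intro s t hs ht hst
    have hsub : F s ⊆ F t := hmono hs ht hst
    have : (μ (F t \ F s)).toReal = (t - s) * (μ A).toReal := by
      rw [mreal_diff (μ := μ) _ _ (hFm s) hsub, hval s hs, hval t ht]; ring
    rw [← this, ENNReal.ofReal_toReal (measure_ne_top μ _)]
  -- bound both error sets by |t - t₀|
  have hb : ∀ t ∈ Icc (0:ℝ) 1, μ (F t \ F t₀) ≤ ENNReal.ofReal (|t - t₀| * (μ A).toReal)
      ∧ μ (F t₀ \ F t) ≤ ENNReal.ofReal (|t - t₀| * (μ A).toReal) := by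
    intro t ht
    rcases le_total t t₀ with h | h
    · have h1 : F t ⊆ F t₀ := hmono ht ht₀ h
      constructor
      · rw [diff_eq_empty.mpr h1]; simp
      · refine (key t t₀ ht ht₀ h).trans ?_
        apply ENNReal.ofReal_le_ofReal
        have : |t - t₀| = t₀ - t := by rw [abs_sub_comm]; exact abs_of_nonneg (by linarith)
        rw [this]
    · have h1 : F t₀ ⊆ F t := hmono ht₀ ht h
      constructor
      · refine (key t₀ t ht₀ ht h).trans ?_
        apply ENNReal.ofReal_le_ofReal
        rw [abs_of_nonneg (by linarith)]
      · rw [diff_eq_empty.mpr h1]; simp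
  -- tendsto of measures of error sets to 0
  have hlim : Tendsto (fun t => ENNReal.ofReal (|t - t₀| * (μ A).toReal)) (𝓝[Icc (0:ℝ) 1] t₀)
      (𝓝 0) := by
    have : Tendsto (fun t : ℝ => |t - t₀| * (μ A).toReal) (𝓝[Icc (0:ℝ) 1] t₀) (𝓝 0) := by
      have : ContinuousAt (fun t : ℝ => |t - t₀| * (μ A).toReal) t₀ := by
        fun_prop
      have h2 := this.continuousWithinAt (s := Icc (0:ℝ) 1)
      simpa using h2.tendsto
    have h := (ENNReal.continuous_ofReal.tendsto 0).comp this
    rw [ENNReal.ofReal_zero] at h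
    exact h
  have hm1 : Tendsto (fun t => μ (F t \ F t₀)) (𝓝[Icc (0:ℝ) 1] t₀) (𝓝 0) := by
    refine tendsto_of_tendsto_of_tendsto_of_le_of_le' tendsto_const_nhds hlim ?_ ?_
    · exact Eventually.of_forall fun _ => zero_le
    · exact eventually_nhdsWithin_of_forall fun t ht => (hb t ht).1
  have hm2 : Tendsto (fun t => μ (F t₀ \ F t)) (𝓝[Icc (0:ℝ) 1] t₀) (𝓝 0) := by
    refine tendsto_of_tendsto_of_tendsto_of_le_of_le' tendsto_const_nhds hlim ?_ ?_
    · exact Eventually.of_forall fun _ => zero_le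
    · exact eventually_nhdsWithin_of_forall fun t ht => (hb t ht).2
  have hi1 : Tendsto (fun t => ∫ x in F t \ F t₀, f x ∂μ) (𝓝[Icc (0:ℝ) 1] t₀) (𝓝 0) :=
    hf.tendsto_setIntegral_nhds_zero hm1
  have hi2 : Tendsto (fun t => ∫ x in F t₀ \ F t, f x ∂μ) (𝓝[Icc (0:ℝ) 1] t₀) (𝓝 0) :=
    hf.tendsto_setIntegral_nhds_zero hm2
  have heq : ∀ t ∈ Icc (0:ℝ) 1, ∫ x in F t, f x ∂μ =
      (∫ x in F t₀, f x ∂μ) + (∫ x in F t \ F t₀, f x ∂μ) - ∫ x in F t₀ \ F t, f x ∂μ := by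
    intro t ht
    rcases le_total t t₀ with h | h
    · have h1 : F t ⊆ F t₀ := hmono ht ht₀ h
      rw [diff_eq_empty.mpr h1]
      have := integral_diff (hFm t) hf.integrableOn h1
      simp only [Measure.restrict_empty, integral_zero_measure]
      linarith
    · have h1 : F t₀ ⊆ F t := hmono ht₀ ht h
      rw [diff_eq_empty.mpr h1]
      have := integral_diff (hFm t₀) hf.integrableOn h1
      simp only [Measure.restrict_empty, integral_zero_measure]
      linarith
  have : Tendsto (fun t => (∫ x in F t₀, f x ∂μ) + (∫ x in F t \ F t₀, f x ∂μ)
      - ∫ x in F t₀ \ F t, f x ∂μ) (𝓝[Icc (0:ℝ) 1] t₀) (𝓝 (∫ x in F t₀, f x ∂μ)) := by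
    have := (tendsto_const_nhds (x := ∫ x in F t₀, f x ∂μ)
      (f := 𝓝[Icc (0:ℝ) 1] t₀)).add hi1 |>.sub hi2
    simpa using this
  exact Tendsto.congr' (eventually_nhdsWithin_of_forall fun t ht => (heq t ht).symm) this


/-- dyadic refinement scheme driven by a halving function `h` -/
def dy (h : Set ℝ → Set ℝ) (A : Set ℝ) : ℕ → ℕ → Set ℝ
  | 0, i => if i = 0 then ∅ else A
  | m+1, i => if i % 2 = 0 then dy h A m (i / 2)
      else dy h A m (i / 2) ∪ h (dy h A m (i / 2 + 1) \ dy h A m (i / 2))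


lemma dy_meas (hh : ∀ S, MeasurableSet (h S)) (hA : MeasurableSet A) :
    ∀ m i, MeasurableSet (dy h A m i) := by
  intro m
  induction m with
  | zero => intro i; by_cases hi : i = 0 <;> simp [dy, hi, hA]
  | succ m IH =>
    intro i
    by_cases hi : i % 2 = 0 <;> simp only [dy, hi, if_true, if_false, reduceIte]
    · exact IH _
    · exact (IH _).union (hh _)

lemma dy_succ_subset (hsub : ∀ S, h S ⊆ S) : ∀ m i, dy h A m i ⊆ dy h A m (i+1) := by
  intro m
  induction m with
  | zero =>
    intro i
    by_cases hi : i = 0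
    · simp [dy, hi]
    · simp [dy, hi]
  | succ m IH =>
    intro i
    rcases Nat.mod_two_eq_zero_or_one i with hi | hi
    · have e1 : (i+1) % 2 = 1 := by omega
      have e2 : (i+1) / 2 = i / 2 := by omega
      simp only [dy, hi, e1, e2, if_true, reduceIte]
      exact subset_union_left
    · have e1 : (i+1) % 2 = 0 := by omega
      have e2 : (i+1) / 2 = i / 2 + 1 := by omega
      simp only [dy, hi, e1, e2, reduceIte]
      exact union_subset (IH _) ((hsub _).trans diff_subset)

lemma dy_mono (hsub : ∀ S, h S ⊆ S) (m : ℕ) : Monotone (dy h A m) :=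
  monotone_nat_of_le_succ fun i => dy_succ_subset hsub m i

lemma dy_subset (hsub : ∀ S, h S ⊆ S) : ∀ m i, dy h A m i ⊆ A := by
  intro m
  induction m with
  | zero => intro i; by_cases hi : i = 0 <;> simp [dy, hi]
  | succ m IH =>
    intro i
    by_cases hi : i % 2 = 0 <;> simp only [dy, hi, if_true, if_false, reduceIte]
    · exact IH _
    · exact union_subset (IH _) ((hsub _).trans (diff_subset.trans (IH _)))

lemma dy_two_mul (m i : ℕ) : dy h A (m+1) (2*i) = dy h A m i := by
  have e1 : (2*i) % 2 = 0 := by omega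
  have e2 : (2*i) / 2 = i := by omega
  simp [dy, e1, e2]



section Family

variable {μ : Measure ℝ} [IsFiniteMeasure μ]

lemma family_of_half (n : ℕ) (g : Fin n → ℝ → ℝ) (hg : ∀ j, Integrable (g j) μ)
    (H : ∀ A : Set ℝ, MeasurableSet A → ∃ B, B ⊆ A ∧ MeasurableSet B ∧
      (μ B).toReal = (μ A).toReal / 2 ∧
      ∀ j, ∫ x in B, g j x ∂μ = (∫ x in A, g j x ∂μ) / 2)
    (A : Set ℝ) (hA : MeasurableSet A) :
    ∃ E : ℝ → Set ℝ, MonotoneOn E (Icc 0 1) ∧ (∀ t, MeasurableSet (E t)) ∧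
      (∀ t, E t ⊆ A) ∧
      (∀ t ∈ Icc (0:ℝ) 1, (μ (E t)).toReal = t * (μ A).toReal) ∧
      (∀ t ∈ Icc (0:ℝ) 1, ∀ j, ∫ x in E t, g j x ∂μ = t * ∫ x in A, g j x ∂μ) := by
  classical
  -- the halving choice function
  set half : Set ℝ → Set ℝ := fun S => if hS : MeasurableSet S then (H S hS).choose else ∅
    with hhalf_def
  have hhalf_sub : ∀ S, half S ⊆ S := by
    intro S; rw [hhalf_def]; dsimp only
    split
    · exact (H S ‹_›).choose_spec.1
    · exact empty_subset _
  have hhalf_meas : ∀ S, MeasurableSet (half S) := by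
    intro S; rw [hhalf_def]; dsimp only
    split
    · exact (H S ‹_›).choose_spec.2.1
    · exact MeasurableSet.empty
  have hhalf_m : ∀ S, MeasurableSet S → (μ (half S)).toReal = (μ S).toReal / 2 := by
    intro S hS; rw [hhalf_def]; dsimp only
    rw [dif_pos hS]; exact (H S hS).choose_spec.2.2.1
  have hhalf_i : ∀ S, MeasurableSet S → ∀ j,
      ∫ x in half S, g j x ∂μ = (∫ x in S, g j x ∂μ) / 2 := by
    intro S hS; rw [hhalf_def]; dsimp only
    rw [dif_pos hS]; exact (H S hS).choose_spec.2.2.2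
  have hmeas : ∀ m i, MeasurableSet (dy half A m i) := dy_meas hhalf_meas hA
  have hmono : ∀ m, Monotone (dy half A m) := dy_mono hhalf_sub
  have hsubA : ∀ m i, dy half A m i ⊆ A := dy_subset hhalf_sub
  -- values of the dyadic scheme
  have hval : ∀ m, ∀ i ≤ 2^m,
      ((μ (dy half A m i)).toReal = ((i:ℝ) / 2^m) * (μ A).toReal) ∧
      (∀ j, ∫ x in dy half A m i, g j x ∂μ = ((i:ℝ) / 2^m) * ∫ x in A, g j x ∂μ) := by
    intro m
    induction m with
    | zero =>
      intro i hi
      interval_cases i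
      · constructor
        · simp [dy]
        · intro j; simp [dy]
      · constructor
        · simp [dy]
        · intro j; simp [dy]
    | succ m IH =>
      intro i hi
      have hp : (2:ℕ)^(m+1) = 2^m * 2 := pow_succ 2 m
      rcases Nat.mod_two_eq_zero_or_one i with hpar | hpar
      · -- even
        have hq : i / 2 ≤ 2^m := by omega
        have hcast : (i:ℝ) = 2 * (i/2 : ℕ) := by
          have : i = 2 * (i/2) := by omega
          exact_mod_cast this
        have hrat : ((i:ℝ)/2^(m+1)) = ((i/2 : ℕ) : ℝ) / 2^m := by
          rw [hcast, pow_succ]; field_simp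
        obtain ⟨IH1, IH2⟩ := IH (i/2) hq
        simp only [dy, hpar, reduceIte, if_true]
        exact ⟨by rw [hrat]; exact IH1, fun j => by rw [hrat]; exact IH2 j⟩
      · -- odd
        have hq1 : i / 2 + 1 ≤ 2^m := by omega
        have hq0 : i / 2 ≤ 2^m := by omega
        obtain ⟨IH0, IH0'⟩ := IH (i/2) hq0
        obtain ⟨IH1, IH1'⟩ := IH (i/2 + 1) hq1
        set S := dy half A m (i/2 + 1) \ dy half A m (i/2) with hS
        have hSm : MeasurableSet S := (hmeas _ _).diff (hmeas _ _)
        have hsub01 : dy half A m (i/2) ⊆ dy half A m (i/2+1) :=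
          hmono m (Nat.le_succ _)
        have hdisj : Disjoint (dy half A m (i/2)) (half S) :=
          (disjoint_sdiff_self_right (x := dy half A m (i/2))
            (y := dy half A m (i/2+1))).mono_right (hhalf_sub S)
        have hSval : (μ S).toReal =
            (((i/2+1 : ℕ):ℝ)/2^m) * (μ A).toReal - (((i/2 : ℕ):ℝ)/2^m) * (μ A).toReal := by
          rw [hS, mreal_diff _ _ (hmeas _ _) hsub01, IH0, IH1]
        have hSint : ∀ j, ∫ x in S, g j x ∂μ =
            (((i/2+1 : ℕ):ℝ)/2^m) * (∫ x in A, g j x ∂μ)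
              - (((i/2 : ℕ):ℝ)/2^m) * ∫ x in A, g j x ∂μ := by
          intro j
          rw [hS, integral_diff (hmeas _ _) (hg j).integrableOn hsub01, IH0' j, IH1' j]
        have hcast : (i:ℝ) = 2 * (i/2 : ℕ) + 1 := by
          have : i = 2 * (i/2) + 1 := by omega
          exact_mod_cast this
        simp only [dy, hpar]
        rw [if_neg one_ne_zero]
        constructor
        · rw [mreal_union (μ := μ) (hhalf_meas S) hdisj, hhalf_m S hSm, hSval, IH0,
            hcast, pow_succ]
          push_cast
          field_simp
          ring
        · intro j
          rw [setIntegral_union hdisj (hhalf_meas S) (hg j).integrableOn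
            (hg j).integrableOn, hhalf_i S hSm j, hSint j, IH0' j, hcast, pow_succ]
          push_cast
          field_simp
          ring
  -- the family
  refine ⟨fun θ => ⋃ m, dy half A m ⌊θ * 2^m⌋₊, ?_, ?_, ?_, ?_, ?_⟩
  · intro s hs t ht hst
    exact iUnion_mono fun m => hmono m (Nat.floor_mono
      (mul_le_mul_of_nonneg_right hst (by positivity)))
  · exact fun t => MeasurableSet.iUnion fun m => hmeas _ _
  · exact fun t => iUnion_subset fun m => hsubA _ _
  all_goals {
    intro θ hθ
    obtain ⟨hθ0, hθ1⟩ := hθ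
    have hCmono : Monotone (fun m => dy half A m ⌊θ * 2^m⌋₊) := by
      apply monotone_nat_of_le_succ
      intro m
      have h1 : dy half A m ⌊θ * 2^m⌋₊ = dy half A (m+1) (2 * ⌊θ * 2^m⌋₊) :=
        (dy_two_mul m _).symm
      rw [h1]
      apply hmono (m+1)
      apply Nat.le_floor
      push_cast
      rw [pow_succ]
      nlinarith [Nat.floor_le (by positivity : (0:ℝ) ≤ θ * 2^m)]
    have hfl : ∀ m : ℕ, ⌊θ * 2^m⌋₊ ≤ 2^m := by
      intro m
      have h1 : θ * 2^m ≤ ((2^m : ℕ) : ℝ) := by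
        push_cast
        nlinarith [pow_pos (by norm_num : (0:ℝ) < 2) m]
      calc ⌊θ * 2^m⌋₊ ≤ ⌊((2^m : ℕ) : ℝ)⌋₊ := Nat.floor_mono h1
        _ = 2^m := Nat.floor_natCast _
    have hrat : Tendsto (fun m : ℕ => (⌊θ * 2^m⌋₊ : ℝ) / 2^m) atTop (𝓝 θ) := by
      have hlow : ∀ m : ℕ, θ - (1/2:ℝ)^m ≤ (⌊θ * 2^m⌋₊ : ℝ) / 2^m := by
        intro m
        have h2 : (0:ℝ) < 2^m := by positivity
        have hfl1 := Nat.sub_one_lt_floor (θ * 2^m)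
        have hpow : (1/2:ℝ)^m * 2^m = 1 := by rw [← mul_pow]; norm_num
        rw [le_div_iff₀ h2]
        nlinarith [hfl1, hpow]
      have hup : ∀ m : ℕ, (⌊θ * 2^m⌋₊ : ℝ) / 2^m ≤ θ := by
        intro m
        have h2 : (0:ℝ) < 2^m := by positivity
        rw [div_le_iff₀ h2]
        exact Nat.floor_le (by positivity)
      refine tendsto_of_tendsto_of_tendsto_of_le_of_le ?_ tendsto_const_nhds hlow hup
      have : Tendsto (fun m : ℕ => (1/2:ℝ)^m) atTop (𝓝 0) := by
        apply tendsto_pow_atTop_nhds_zero_of_lt_one <;> norm_num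
      simpa using tendsto_const_nhds.sub this
    first
    | · -- measure value
        have hlim1 : Tendsto (fun m => μ (dy half A m ⌊θ * 2^m⌋₊)) atTop
            (𝓝 (μ (⋃ m, dy half A m ⌊θ * 2^m⌋₊))) :=
          tendsto_measure_iUnion_atTop hCmono
        have hlim2 : Tendsto (fun m => μ (dy half A m ⌊θ * 2^m⌋₊)) atTop
            (𝓝 (ENNReal.ofReal (θ * (μ A).toReal))) := by
          have heq : ∀ m, μ (dy half A m ⌊θ * 2^m⌋₊) =
              ENNReal.ofReal (((⌊θ * 2^m⌋₊ : ℝ)/2^m) * (μ A).toReal) := by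
            intro m
            rw [← (hval m _ (hfl m)).1, ENNReal.ofReal_toReal (measure_ne_top μ _)]
          simp_rw [heq]
          exact (ENNReal.continuous_ofReal.tendsto _).comp
            (hrat.mul_const _)
        have := tendsto_nhds_unique hlim1 hlim2
        rw [this, ENNReal.toReal_ofReal (by positivity)]
    | · -- integral values
        intro j
        have hlim1 : Tendsto (fun m => ∫ x in dy half A m ⌊θ * 2^m⌋₊, g j x ∂μ) atTop
            (𝓝 (∫ x in ⋃ m, dy half A m ⌊θ * 2^m⌋₊, g j x ∂μ)) :=
          tendsto_setIntegral_of_monotone (fun m => hmeas _ _) hCmono (hg j).integrableOn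
        have hlim2 : Tendsto (fun m => ∫ x in dy half A m ⌊θ * 2^m⌋₊, g j x ∂μ) atTop
            (𝓝 (θ * ∫ x in A, g j x ∂μ)) := by
          have heq : ∀ m, ∫ x in dy half A m ⌊θ * 2^m⌋₊, g j x ∂μ =
              ((⌊θ * 2^m⌋₊ : ℝ)/2^m) * ∫ x in A, g j x ∂μ := fun m => (hval m _ (hfl m)).2 j
          simp_rw [heq]
          exact hrat.mul_const _
        exact tendsto_nhds_unique hlim1 hlim2
  }


/-- base halving: a subset of half the measure, via IVT for `x ↦ μ (A ∩ Iic x)` -/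
lemma exists_half_measure (hle : μ ≤ volume) {A : Set ℝ} (hA : MeasurableSet A) :
    ∃ B, B ⊆ A ∧ MeasurableSet B ∧ (μ B).toReal = (μ A).toReal / 2 := by
  set f : ℝ → ℝ := fun x => (μ (A ∩ Iic x)).toReal with hf
  have hfmono : Monotone f := fun x y hxy =>
    ENNReal.toReal_mono (measure_ne_top μ _) (measure_mono (inter_subset_inter_right _ (Iic_subset_Iic.mpr hxy)))
  have key : ∀ x y : ℝ, y ≤ x → f x - f y ≤ x - y := by
    intro x y hxy
    have hdiff : (A ∩ Iic x) \ (A ∩ Iic y) = A ∩ Ioc y x := by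
      rw [← inter_diff_distrib_left, Iic_sdiff_Iic]
    have h1 : f x - f y = (μ (A ∩ Ioc y x)).toReal := by
      rw [hf]
      dsimp only
      rw [← hdiff, mreal_diff _ _ (hA.inter measurableSet_Iic)
        (inter_subset_inter_right _ (Iic_subset_Iic.mpr hxy))]
    have h2 : (μ (A ∩ Ioc y x)).toReal ≤ x - y := by
      calc (μ (A ∩ Ioc y x)).toReal ≤ (μ (Ioc y x)).toReal :=
            ENNReal.toReal_mono (measure_ne_top μ _) (measure_mono inter_subset_right)
        _ ≤ (ENNReal.ofReal (x - y)).toReal := by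
            apply ENNReal.toReal_mono ENNReal.ofReal_ne_top
            exact (hle _).trans_eq (Real.volume_Ioc (a := y) (b := x))
        _ = x - y := ENNReal.toReal_ofReal (by linarith)
    linarith [h1 ▸ h2]
  have hcont : Continuous f := by
    have : LipschitzWith 1 f := by
      apply LipschitzWith.of_dist_le_mul
      intro x y
      rcases le_total y x with hxy | hxy
      · have h0 : 0 ≤ f x - f y := sub_nonneg.mpr (hfmono hxy)
        rw [Real.dist_eq, Real.dist_eq, abs_of_nonneg h0,
          abs_of_nonneg (by linarith : (0:ℝ) ≤ x - y), NNReal.coe_one, one_mul]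
        exact key x y hxy
      · have h0 : 0 ≤ f y - f x := sub_nonneg.mpr (hfmono hxy)
        rw [Real.dist_eq, Real.dist_eq, abs_of_nonpos (by linarith : f x - f y ≤ 0),
          abs_of_nonpos (by linarith : x - y ≤ 0), NNReal.coe_one, one_mul]
        have := key y x hxy
        linarith
    exact this.continuous
  rcases eq_or_lt_of_le (ENNReal.toReal_nonneg : (0:ℝ) ≤ (μ A).toReal) with hzero | hpos
  · exact ⟨∅, empty_subset _, MeasurableSet.empty, by simp [← hzero]⟩
  set c := (μ A).toReal / 2 with hc
  have hcpos : 0 < c := by positivity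
  -- limits at ∓∞
  have htop : Tendsto (fun x => μ (A ∩ Iic x)) atTop (𝓝 (μ A)) := by
    have h1 : Monotone fun x : ℝ => A ∩ Iic x :=
      fun x y hxy => inter_subset_inter_right _ (Iic_subset_Iic.mpr hxy)
    have h2 := tendsto_measure_iUnion_atTop (μ := μ) h1
    have h3 : ⋃ x : ℝ, A ∩ Iic x = A := by
      rw [← inter_iUnion, iUnion_Iic, inter_univ]
    rw [h3] at h2
    exact h2
  have hbot : Tendsto (fun x => μ (A ∩ Iic x)) atBot (𝓝 0) := by
    have h1 : Monotone fun x : ℝ => A ∩ Iic x :=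
      fun x y hxy => inter_subset_inter_right _ (Iic_subset_Iic.mpr hxy)
    have h2 := tendsto_measure_iInter_atBot (μ := μ)
      (fun x => (hA.inter measurableSet_Iic).nullMeasurableSet) h1 ⟨0, measure_ne_top μ _⟩
    have h3 : ⋂ x : ℝ, A ∩ Iic x = ∅ := by
      rw [← inter_iInter]
      have : ⋂ x : ℝ, Iic x = (∅ : Set ℝ) := by
        ext y; simp only [mem_iInter, mem_Iic, mem_empty_iff_false, iff_false, not_forall]
        exact ⟨y - 1, by simp [not_le]⟩
      rw [this, inter_empty]
    rw [h3, measure_empty] at h2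
    exact h2
  have htopR : Tendsto f atTop (𝓝 (μ A).toReal) :=
    (ENNReal.tendsto_toReal (measure_ne_top μ A)).comp htop
  have hbotR : Tendsto f atBot (𝓝 0) := by
    have := (ENNReal.tendsto_toReal ENNReal.zero_ne_top).comp hbot
    rw [ENNReal.toReal_zero] at this
    exact this
  -- find endpoints
  obtain ⟨x₀, hx₀⟩ : ∃ x₀, f x₀ < c := by
    have := hbotR.eventually (eventually_lt_nhds hcpos)
    exact this.exists
  obtain ⟨x₁, hx₁⟩ : ∃ x₁, c ≤ f x₁ := by
    have h1 : c < (μ A).toReal := by rw [hc]; linarith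
    have := htopR.eventually (eventually_gt_nhds h1)
    exact this.exists.imp fun x h => le_of_lt h
  have hx01 : x₀ ≤ max x₀ x₁ := le_max_left _ _
  have hcx : c ∈ Icc (f x₀) (f (max x₀ x₁)) :=
    ⟨le_of_lt hx₀, hx₁.trans (hfmono (le_max_right _ _))⟩
  obtain ⟨x, _, hx⟩ := intermediate_value_Icc hx01 hcont.continuousOn hcx
  exact ⟨A ∩ Iic x, inter_subset_left, hA.inter measurableSet_Iic, hx⟩

/-- Main lemma: a monotone family realizing every proportion simultaneously for
`n` integrable functions. -/
lemma main_family (hle : μ ≤ volume) :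
    ∀ (n : ℕ) (g : Fin n → ℝ → ℝ), (∀ j, Integrable (g j) μ) →
    ∀ (A : Set ℝ), MeasurableSet A →
    ∃ E : ℝ → Set ℝ, MonotoneOn E (Icc 0 1) ∧ (∀ t, MeasurableSet (E t)) ∧
      (∀ t, E t ⊆ A) ∧
      (∀ t ∈ Icc (0:ℝ) 1, (μ (E t)).toReal = t * (μ A).toReal) ∧
      (∀ t ∈ Icc (0:ℝ) 1, ∀ j, ∫ x in E t, g j x ∂μ = t * ∫ x in A, g j x ∂μ) := by
  intro n
  induction n with
  | zero =>
    intro g hg A hA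
    apply family_of_half 0 g hg _ A hA
    intro S hS
    obtain ⟨B, h1, h2, h3⟩ := exists_half_measure hle hS
    exact ⟨B, h1, h2, h3, fun j => j.elim0⟩
  | succ n IH =>
    intro g hg A hA
    apply family_of_half (n+1) g hg _ A hA
    -- halving for n+1 functions via IVT
    intro S hS
    obtain ⟨F, hFmono, hFm, hFS, hFval, hFint⟩ :=
      IH (fun j => g j.castSucc) (fun j => hg _) S hS
    set gN := g (Fin.last n) with hgN
    set I := ∫ x in S, gN x ∂μ with hI
    set G : ℝ → ℝ := fun t => ∫ x in F t, gN x ∂μ with hG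
    have hGcont : ContinuousOn G (Icc 0 1) :=
      cont_family F hFm hFmono hFval (hg (Fin.last n))
    have hG0 : G 0 = 0 := by
      have h1 : (μ (F 0)).toReal = 0 := by
        rw [hFval 0 (by norm_num)]; ring
      have h2 : μ (F 0) = 0 :=
        ((ENNReal.toReal_eq_zero_iff _).mp h1).resolve_right (measure_ne_top μ _)
      rw [hG]; dsimp only
      rw [Measure.restrict_eq_zero.mpr h2, integral_zero_measure]
    have hG1 : G 1 = I := by
      rw [hG, hI]; dsimp only
      exact integral_eq_of_mreal_eq (hFm 1) (hFS 1)
        (by rw [hFval 1 (by norm_num)]; ring) gN (hg (Fin.last n))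
    set h : ℝ → ℝ := fun t => G t - G (t + 1/2) + I with hh
    have hhcont : ContinuousOn h (Icc 0 (1/2 : ℝ)) := by
      have hmap : MapsTo (fun t : ℝ => t + 1/2) (Icc 0 (1/2 : ℝ)) (Icc 0 1) := by
        intro t ht; exact ⟨by linarith [ht.1], by linarith [ht.2]⟩
      have h1 : ContinuousOn (fun t : ℝ => G (t + 1/2)) (Icc 0 (1/2:ℝ)) :=
        hGcont.comp ((continuous_id.add continuous_const).continuousOn) hmap
      have h2 : ContinuousOn G (Icc 0 (1/2:ℝ)) :=
        hGcont.mono (Icc_subset_Icc le_rfl (by norm_num))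
      exact (h2.sub h1).add continuousOn_const
    have hsum : h 0 + h (1/2) = I := by
      rw [hh]; dsimp only
      rw [show (0:ℝ)+1/2 = 1/2 by norm_num, show (1/2:ℝ)+1/2 = 1 by norm_num, hG0, hG1]
      ring
    have hmem : I/2 ∈ uIcc (h 0) (h (1/2:ℝ)) := by
      rcases le_total (h 0) (h (1/2:ℝ)) with hle' | hle'
      · rw [uIcc_of_le hle']; constructor <;> linarith
      · rw [uIcc_of_ge hle']; constructor <;> linarith
    have huIcc : uIcc (0:ℝ) (1/2) = Icc 0 (1/2:ℝ) := uIcc_of_le (by norm_num)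
    obtain ⟨t, htmem, hht⟩ := intermediate_value_uIcc (huIcc ▸ hhcont) hmem
    rw [huIcc] at htmem
    obtain ⟨ht0, ht12⟩ := htmem
    have htI : t ∈ Icc (0:ℝ) 1 := ⟨ht0, by linarith⟩
    have htI' : t + 1/2 ∈ Icc (0:ℝ) 1 := ⟨by linarith, by linarith⟩
    have hsub : F t ⊆ F (t + 1/2) := hFmono htI htI' (by linarith)
    refine ⟨F t ∪ (S \ F (t + 1/2)), ?_, ?_, ?_, ?_⟩
    · exact union_subset (hFS t) diff_subset
    · exact (hFm t).union (hS.diff (hFm _))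
    all_goals {
      have hdisj : Disjoint (F t) (S \ F (t + 1/2)) :=
        (disjoint_sdiff_self_right (x := F (t + 1/2)) (y := S)).mono_left hsub
      have hdm : MeasurableSet (S \ F (t + 1/2)) := hS.diff (hFm _)
      first
      | · rw [mreal_union (μ := μ) hdm hdisj,
            mreal_diff (μ := μ) _ _ (hFm _) (hFS _),
            hFval t htI, hFval _ htI']
          ring
      | · intro j
          rw [setIntegral_union hdisj hdm (hg j).integrableOn (hg j).integrableOn,
            integral_diff (hFm _) (hg j).integrableOn (hFS _)]
          rcases Fin.eq_castSucc_or_eq_last j with ⟨j', rfl⟩ | rfl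
          · rw [hFint t htI j', hFint _ htI' j']
            ring
          · have hhtt : G t - G (t + 1/2) + I = I / 2 := hht
            have e1 : (∫ x in F t, g (Fin.last n) x ∂μ) = G t := rfl
            have e2 : (∫ x in F (t + 1/2), g (Fin.last n) x ∂μ) = G (t + 1/2) := rfl
            have e3 : (∫ x in S, g (Fin.last n) x ∂μ) = I := rfl
            rw [e1, e2, e3]
            linarith
    }

end Family

end SpikeVar


/-- Vector-valued spike-variation set: for finitely many integrable functions `φ 1, …, φ k`
on `[0,T]` and `θ ∈ [0,1]`, there exists a measurable `E ⊆ [0,T]` of Lebesgue measure `θ·T`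
with `∫_E φ i = θ·∫_0^T φ i` for every `i`. -/
theorem exists_spike_variation_set_vector
    (T : ℝ) (hT : 0 < T) (k : ℕ) (hk : 0 < k) (φ : Fin k → ℝ → ℝ)
    (hφ : ∀ i, IntegrableOn (φ i) (Set.Icc 0 T) volume)
    (θ : ℝ) (hθ : θ ∈ Set.Icc (0 : ℝ) 1) :
    ∃ E : Set ℝ, E ⊆ Set.Icc 0 T ∧ MeasurableSet E ∧
      volume E = ENNReal.ofReal (θ * T) ∧
      ∀ i, ∫ t in E, φ i t = θ * ∫ t in Set.Icc 0 T, φ i t := by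
  set μ : Measure ℝ := volume.restrict (Set.Icc (0:ℝ) T) with hμdef
  haveI : IsFiniteMeasure μ := by
    constructor
    rw [hμdef, Measure.restrict_apply_univ, Real.volume_Icc]
    exact ENNReal.ofReal_lt_top
  have hle : μ ≤ volume := Measure.restrict_le_self
  have hg : ∀ i, Integrable (φ i) μ := hφ
  obtain ⟨E, _, hEm, hEsub, hval, hint⟩ :=
    SpikeVar.main_family hle k φ hg (Set.Icc 0 T) measurableSet_Icc
  have hrestrE : μ.restrict (E θ) = volume.restrict (E θ) := by
    rw [hμdef, Measure.restrict_restrict (hEm θ),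
      Set.inter_eq_self_of_subset_left (hEsub θ)]
  have hrestrA : μ.restrict (Set.Icc (0:ℝ) T) = volume.restrict (Set.Icc (0:ℝ) T) := by
    rw [hμdef, Measure.restrict_restrict measurableSet_Icc, Set.inter_self]
  have hμIcc : (μ (Set.Icc 0 T)).toReal = T := by
    rw [hμdef, Measure.restrict_apply measurableSet_Icc, Set.inter_self, Real.volume_Icc,
      sub_zero, ENNReal.toReal_ofReal hT.le]
  refine ⟨E θ, hEsub θ, hEm θ, ?_, ?_⟩
  · have h1 : (μ (E θ)).toReal = θ * T := by rw [hval θ hθ, hμIcc]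
    have h2 : volume (E θ) = μ (E θ) := by
      rw [hμdef, Measure.restrict_apply (hEm θ),
        Set.inter_eq_self_of_subset_left (hEsub θ)]
    rw [h2, ← h1, ENNReal.ofReal_toReal (measure_ne_top μ _)]
  · intro i
    have := hint θ hθ i
    rwa [show (∫ x in E θ, φ i x ∂μ) = ∫ t in E θ, φ i t by rw [hrestrE],
      show (∫ x in Set.Icc (0:ℝ) T, φ i x ∂μ) = ∫ t in Set.Icc (0:ℝ) T, φ i t by rw [hrestrA]]
      at this
end

section
/- Let α ≥ 0 and β ≥ 0 with α + β > 0, let f, g : [0,1] → ℝ be bounded Lebesgue-measurable functions, and let K : [0,1] × [0,1] → ℝ be continuous. Then for Lebesgue-almost every t ∈ (0,1), we have lim_{r→0+} (1/r²) ∫_{t−rβ}^{t+rα} ∫_{t−rβ}^{u} f(u) K(u,s) g(s) ds du = ((α+β)²/2) · f(t) K(t,t) g(t). -/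
open MeasureTheory Filter Metric

set_option maxHeartbeats 1000000 in
/-- Double-integral localization over a shrinking triangle: for bounded measurable `f, g` on
`[0,1]`, a continuous kernel `K` on `[0,1]²`, and `α, β ≥ 0` with `α + β > 0`, for almost every
`t ∈ (0,1)` one has
`(1/r²) ∫_{t-rβ}^{t+rα} ∫_{t-rβ}^{u} f(u) K(u,s) g(s) ds du → ((α+β)²/2)·f(t) K(t,t) g(t)`
as `r → 0⁺`. -/
theorem ae_tendsto_triangle_double_integral
    (α β : ℝ) (hα : 0 ≤ α) (hβ : 0 ≤ β) (hαβ : 0 < α + β)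
    (f g : ℝ → ℝ) (hf : Measurable f) (hg : Measurable g)
    (Cf : ℝ) (hfb : ∀ t ∈ Set.Icc (0 : ℝ) 1, |f t| ≤ Cf)
    (Cg : ℝ) (hgb : ∀ t ∈ Set.Icc (0 : ℝ) 1, |g t| ≤ Cg)
    (K : ℝ → ℝ → ℝ)
    (hK : ContinuousOn (fun p : ℝ × ℝ => K p.1 p.2) (Set.Icc 0 1 ×ˢ Set.Icc 0 1)) :
    ∀ᵐ t ∂(volume : Measure ℝ), t ∈ Set.Ioo (0 : ℝ) 1 →
      Tendsto
        (fun r : ℝ => (1 / r ^ 2) *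
          ∫ u in Set.Icc (t - r * β) (t + r * α),
            ∫ s in Set.Icc (t - r * β) u, f u * K u s * g s)
        (nhdsWithin 0 (Set.Ioi 0))
        (nhds (((α + β) ^ 2 / 2) * (f t * K t t * g t))) := by
  have le01 : (0:ℝ) ≤ 1 := zero_le_one
  set c := α + β with hc
  have hCf : 0 ≤ Cf := le_trans (abs_nonneg _) (hfb 0 (by norm_num))
  have hCg : 0 ≤ Cg := le_trans (abs_nonneg _) (hgb 0 (by norm_num))
  set f₁ : ℝ → ℝ := (Set.Icc (0:ℝ) 1).indicator f with hf₁def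
  set g₁ : ℝ → ℝ := (Set.Icc (0:ℝ) 1).indicator g with hg₁def
  have hf₁m : Measurable f₁ := hf.indicator measurableSet_Icc
  have hg₁m : Measurable g₁ := hg.indicator measurableSet_Icc
  have hf₁b : ∀ x, |f₁ x| ≤ Cf := by
    intro x
    by_cases hx : x ∈ Set.Icc (0:ℝ) 1
    · rw [hf₁def, Set.indicator_of_mem hx]; exact hfb x hx
    · rw [hf₁def, Set.indicator_of_notMem hx]; simpa using hCf
  have hg₁b : ∀ x, |g₁ x| ≤ Cg := by
    intro x
    by_cases hx : x ∈ Set.Icc (0:ℝ) 1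
    · rw [hg₁def, Set.indicator_of_mem hx]; exact hgb x hx
    · rw [hg₁def, Set.indicator_of_notMem hx]; simpa using hCg
  have hf₁i : Integrable f₁ := by
    rw [hf₁def, integrable_indicator_iff measurableSet_Icc]
    refine Integrable.mono' ((integrableOn_const measure_Icc_lt_top.ne :
        IntegrableOn (fun _ => Cf) (Set.Icc (0:ℝ) 1) volume))
      hf.aestronglyMeasurable.restrict ?_
    rw [ae_restrict_iff' measurableSet_Icc]
    exact ae_of_all _ fun x hx => by simpa [Real.norm_eq_abs] using hfb x hx
  have hg₁i : Integrable g₁ := by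
    rw [hg₁def, integrable_indicator_iff measurableSet_Icc]
    refine Integrable.mono' ((integrableOn_const measure_Icc_lt_top.ne :
        IntegrableOn (fun _ => Cg) (Set.Icc (0:ℝ) 1) volume))
      hg.aestronglyMeasurable.restrict ?_
    rw [ae_restrict_iff' measurableSet_Icc]
    exact ae_of_all _ fun x hx => by simpa [Real.norm_eq_abs] using hgb x hx
  -- the kernel, extended continuously to the whole plane
  have hproj : ∀ x : ℝ, ((Set.projIcc (0:ℝ) 1 le01 x : ℝ)) ∈ Set.Icc (0:ℝ) 1 :=
    fun x => (Set.projIcc (0:ℝ) 1 le01 x).2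
  set K' : ℝ × ℝ → ℝ :=
    fun p => K (Set.projIcc (0:ℝ) 1 le01 p.1) (Set.projIcc (0:ℝ) 1 le01 p.2) with hK'def
  have hK'c : Continuous K' := by
    have hp : Continuous (fun p : ℝ × ℝ =>
        (((Set.projIcc (0:ℝ) 1 le01 p.1 : ℝ)), ((Set.projIcc (0:ℝ) 1 le01 p.2 : ℝ)))) := by
      fun_prop
    exact hK.comp_continuous hp fun p => ⟨hproj _, hproj _⟩
  have hK'eq : ∀ u s : ℝ, u ∈ Set.Icc (0:ℝ) 1 → s ∈ Set.Icc (0:ℝ) 1 → K' (u, s) = K u s := by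
    intro u s hu hs
    rw [hK'def]
    simp [Set.projIcc_of_mem le01 hu, Set.projIcc_of_mem le01 hs]
  obtain ⟨M0, hM0⟩ := (isCompact_Icc.prod isCompact_Icc).exists_bound_of_continuousOn hK
  set M := max M0 0 with hMdef
  have hM : 0 ≤ M := le_max_right _ _
  have hK'b : ∀ p : ℝ × ℝ, |K' p| ≤ M := by
    intro p
    refine le_trans ?_ (le_max_left _ _)
    simpa [Real.norm_eq_abs] using hM0 _ (Set.mk_mem_prod (hproj p.1) (hproj p.2))
  -- Lebesgue points
  have hLPf := IsUnifLocDoublingMeasure.ae_tendsto_average_norm_sub (μ := (volume : Measure ℝ))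
    hf₁i.locallyIntegrable 1
  have hLPg := IsUnifLocDoublingMeasure.ae_tendsto_average_norm_sub (μ := (volume : Measure ℝ))
    hg₁i.locallyIntegrable 1
  filter_upwards [hLPf, hLPg] with t hLf hLg ht
  have ht01 : t ∈ Set.Icc (0:ℝ) 1 := Set.Ioo_subset_Icc_self ht
  have hδt : Tendsto (fun r : ℝ => c * r) (nhdsWithin 0 (Set.Ioi 0))
      (nhdsWithin 0 (Set.Ioi 0)) := by
    rw [tendsto_nhdsWithin_iff]
    constructor
    · have h1 : Tendsto (fun r : ℝ => c * r) (nhds 0) (nhds (c * 0)) :=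
        (continuous_const.mul continuous_id).tendsto 0
      rw [mul_zero] at h1
      exact h1.mono_left nhdsWithin_le_nhds
    · filter_upwards [self_mem_nhdsWithin] with r hr
      exact mul_pos hαβ hr
  have hmemball : ∀ᶠ r : ℝ in nhdsWithin 0 (Set.Ioi 0),
      t ∈ closedBall ((fun _ : ℝ => t) r) (1 * ((fun r : ℝ => c * r) r)) := by
    filter_upwards [self_mem_nhdsWithin] with r hr
    have h0 : (0:ℝ) ≤ 1 * (c * r) := by
      rw [one_mul]; exact (mul_pos hαβ hr).le
    exact mem_closedBall_self h0
  have hEf0 : Tendsto (fun r : ℝ => ⨍ y in closedBall t (c * r), ‖f₁ y - f₁ t‖)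
      (nhdsWithin 0 (Set.Ioi 0)) (nhds 0) := hLf (fun _ => t) (fun r => c * r) hδt hmemball
  have hEg0 : Tendsto (fun r : ℝ => ⨍ y in closedBall t (c * r), ‖g₁ y - g₁ t‖)
      (nhdsWithin 0 (Set.Ioi 0)) (nhds 0) := hLg (fun _ => t) (fun r => c * r) hδt hmemball
  have haux : ∀ φ : ℝ → ℝ,
      Tendsto (fun r : ℝ => ⨍ y in closedBall t (c * r), ‖φ y - φ t‖)
        (nhdsWithin 0 (Set.Ioi 0)) (nhds 0) →
      Tendsto (fun r : ℝ => (1 / r) * ∫ y in closedBall t (c * r), ‖φ y - φ t‖)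
        (nhdsWithin 0 (Set.Ioi 0)) (nhds 0) := by
    intro φ hφ
    have h2c : Tendsto (fun r : ℝ => (2 * c) * ⨍ y in closedBall t (c * r), ‖φ y - φ t‖)
        (nhdsWithin 0 (Set.Ioi 0)) (nhds ((2 * c) * 0)) := hφ.const_mul _
    rw [mul_zero] at h2c
    apply h2c.congr'
    filter_upwards [self_mem_nhdsWithin] with r hr
    have hcr : 0 < c * r := mul_pos hαβ hr
    have hvol : (volume (closedBall t (c * r))).toReal = 2 * (c * r) := by
      rw [Real.volume_closedBall, ENNReal.toReal_ofReal (by linarith)]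
    rw [setAverage_eq, measureReal_def, hvol, smul_eq_mul]
    have hr0 : (r:ℝ) ≠ 0 := ne_of_gt hr
    have hc0 : c ≠ 0 := ne_of_gt hαβ
    field_simp
  have hEf' := haux f₁ hEf0
  have hEg' := haux g₁ hEg0
  rw [Metric.tendsto_nhds]
  intro ε hε
  set C₁ := c * (M * Cg) + c ^ 2 * (Cf * Cg) + c * (Cf * M) + 1 with hC₁def
  have hC₁pos : 0 < C₁ := by
    have h1 : 0 ≤ c * (M * Cg) := mul_nonneg hαβ.le (mul_nonneg hM hCg)
    have h2 : 0 ≤ c ^ 2 * (Cf * Cg) := mul_nonneg (by positivity) (mul_nonneg hCf hCg)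
    have h3 : 0 ≤ c * (Cf * M) := mul_nonneg hαβ.le (mul_nonneg hCf hM)
    rw [hC₁def]; linarith
  set ε' := ε / C₁ with hε'def
  have hε'pos : 0 < ε' := div_pos hε hC₁pos
  obtain ⟨δ, hδpos, hδ⟩ := Metric.continuousAt_iff.1 (hK'c.continuousAt (x := (t, t))) ε' hε'pos
  have hsmall : ∀ᶠ r : ℝ in nhdsWithin 0 (Set.Ioi 0), c * r < min t (min (1 - t) δ) := by
    have hpos : 0 < min t (min (1 - t) δ) :=
      lt_min ht.1 (lt_min (by linarith [ht.2]) hδpos)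
    exact (hδt.mono_right nhdsWithin_le_nhds).eventually_lt_const hpos
  filter_upwards [self_mem_nhdsWithin, hsmall, hEf'.eventually_lt_const hε'pos,
    hEg'.eventually_lt_const hε'pos] with r hr hrs hrf hrg
  -- now everything happens at a fixed small r > 0
  have hr' : (0:ℝ) < r := hr
  have hr0 : r ≠ 0 := ne_of_gt hr'
  set a := t - r * β with hadef
  set b := t + r * α with hbdef
  have hrc : 0 < c * r := mul_pos hαβ hr'
  have hrβ : r * β ≤ c * r := by rw [hc]; nlinarith [mul_nonneg hr'.le hα, mul_nonneg hr'.le hβ]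
  have hrα : r * α ≤ c * r := by rw [hc]; nlinarith [mul_nonneg hr'.le hα, mul_nonneg hr'.le hβ]
  have hcrt : c * r < t := lt_of_lt_of_le hrs (min_le_left _ _)
  have hcrt' : c * r < 1 - t := lt_of_lt_of_le hrs (le_trans (min_le_right _ _) (min_le_left _ _))
  have hcrδ : c * r < δ := lt_of_lt_of_le hrs (le_trans (min_le_right _ _) (min_le_right _ _))
  have ha0 : 0 ≤ a := by rw [hadef]; linarith
  have hb1 : b ≤ 1 := by rw [hbdef]; linarith
  have hat : a ≤ t := by rw [hadef]; nlinarith [mul_nonneg hr'.le hβ]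
  have htb : t ≤ b := by rw [hbdef]; nlinarith [mul_nonneg hr'.le hα]
  have hab : a ≤ b := le_trans hat htb
  have hba : b - a = c * r := by rw [hadef, hbdef, hc]; ring
  have hsub : Set.Icc a b ⊆ Set.Icc (0:ℝ) 1 := Set.Icc_subset_Icc ha0 hb1
  have hball : Set.Icc a b ⊆ closedBall t (c * r) := by
    intro x hx
    rw [mem_closedBall, Real.dist_eq, abs_le]
    have h1 := hx.1
    have h2 := hx.2
    rw [hadef] at h1
    rw [hbdef] at h2
    constructor <;> linarith
  have hKclose : ∀ u ∈ Set.Icc a b, ∀ s ∈ Set.Icc a b, |K' (u, s) - K' (t, t)| ≤ ε' := by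
    intro u hu s hs
    have hdu : dist u t ≤ c * r := hball hu
    have hds : dist s t ≤ c * r := hball hs
    have hd : dist ((u, s) : ℝ × ℝ) (t, t) < δ := by
      rw [Prod.dist_eq]
      exact max_lt (lt_of_le_of_lt hdu hcrδ) (lt_of_le_of_lt hds hcrδ)
    have := hδ hd
    rw [Real.dist_eq] at this
    exact this.le
  set F := f t * K t t * g t with hFdef
  have hFeq : F = f₁ t * K' (t, t) * g₁ t := by
    rw [hFdef, hf₁def, hg₁def, Set.indicator_of_mem ht01, Set.indicator_of_mem ht01,
      hK'eq t t ht01 ht01]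
  set Ef := ∫ y in closedBall t (c * r), ‖f₁ y - f₁ t‖ with hEfdef
  set Eg := ∫ y in closedBall t (c * r), ‖g₁ y - g₁ t‖ with hEgdef
  set J : ℝ → ℝ := fun u => ∫ s in Set.Icc a u, K' (u, s) * g₁ s with hJdef
  set I : ℝ → ℝ := fun u => f₁ u * J u with hIdef
  -- rewrite the double integral with the modified functions
  have hcong : Set.EqOn (fun u => ∫ s in Set.Icc a u, f u * K u s * g s) I (Set.Icc a b) := by
    intro u hu
    have hu01 : u ∈ Set.Icc (0:ℝ) 1 := hsub hu
    have h1 : (∫ s in Set.Icc a u, f u * K u s * g s)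
        = ∫ s in Set.Icc a u, f₁ u * (K' (u, s) * g₁ s) := by
      apply setIntegral_congr_fun measurableSet_Icc
      intro s hs
      have hs01 : s ∈ Set.Icc (0:ℝ) 1 := hsub ⟨hs.1, hs.2.trans hu.2⟩
      show f u * K u s * g s = f₁ u * (K' (u, s) * g₁ s)
      rw [hf₁def, hg₁def, Set.indicator_of_mem hu01, Set.indicator_of_mem hs01,
        hK'eq u s hu01 hs01]
      ring
    simp only [hIdef, hJdef]
    rw [h1, integral_const_mul]
  -- measurability of the inner integral
  have hSm : MeasurableSet {p : ℝ × ℝ | a ≤ p.2 ∧ p.2 ≤ p.1} :=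
    (measurableSet_le measurable_const measurable_snd).inter
      (measurableSet_le measurable_snd measurable_fst)
  have hΨm : Measurable ({p : ℝ × ℝ | a ≤ p.2 ∧ p.2 ≤ p.1}.indicator
      (fun p : ℝ × ℝ => K' p * g₁ p.2)) :=
    (hK'c.measurable.mul (hg₁m.comp measurable_snd)).indicator hSm
  have hJm : Measurable J := by
    have heq : J = fun u => ∫ s, {p : ℝ × ℝ | a ≤ p.2 ∧ p.2 ≤ p.1}.indicator
        (fun p : ℝ × ℝ => K' p * g₁ p.2) (u, s) := by
      funext u
      rw [hJdef]
      simp only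
      rw [← integral_indicator measurableSet_Icc]
      have hind : (Set.Icc a u).indicator (fun s => K' (u, s) * g₁ s)
          = fun s => {p : ℝ × ℝ | a ≤ p.2 ∧ p.2 ≤ p.1}.indicator
            (fun p : ℝ × ℝ => K' p * g₁ p.2) (u, s) := by
        funext s
        by_cases hs : s ∈ Set.Icc a u
        · rw [Set.indicator_of_mem hs, Set.indicator_of_mem (by exact ⟨hs.1, hs.2⟩)]
        · rw [Set.indicator_of_notMem hs, Set.indicator_of_notMem
            (by simpa [Set.mem_Icc] using hs)]
      rw [hind]
    rw [heq]
    exact (hΨm.stronglyMeasurable.integral_prod_right').measurable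
  have hIm : Measurable I := hf₁m.mul hJm
  -- bounds on J and I
  have hJb : ∀ u ∈ Set.Icc a b, |J u| ≤ M * Cg * (c * r) := by
    intro u hu
    have hmeas : volume (Set.Icc a u) < ⊤ := measure_Icc_lt_top
    have h1 : ‖∫ s in Set.Icc a u, K' (u, s) * g₁ s‖
        ≤ M * Cg * (volume (Set.Icc a u)).toReal := by
      rw [← measureReal_def]; apply norm_setIntegral_le_of_norm_le_const hmeas
      intro s _
      rw [Real.norm_eq_abs, abs_mul]
      exact mul_le_mul (hK'b _) (hg₁b _) (abs_nonneg _) hM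
    have h2 : (volume (Set.Icc a u)).toReal ≤ c * r := by
      rw [Real.volume_Icc, ENNReal.toReal_ofReal (by linarith [hu.1] : (0:ℝ) ≤ u - a)]
      have := hu.2; linarith
    rw [hJdef]
    simp only
    rw [← Real.norm_eq_abs]
    calc ‖∫ s in Set.Icc a u, K' (u, s) * g₁ s‖
        ≤ M * Cg * (volume (Set.Icc a u)).toReal := h1
      _ ≤ M * Cg * (c * r) := mul_le_mul_of_nonneg_left h2 (mul_nonneg hM hCg)
  have hIb : ∀ u ∈ Set.Icc a b, ‖I u‖ ≤ Cf * (M * Cg * (c * r)) := by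
    intro u hu
    rw [hIdef]
    simp only
    rw [Real.norm_eq_abs, abs_mul]
    exact mul_le_mul (hf₁b u) (hJb u hu) (abs_nonneg _) hCf
  have hIint : IntegrableOn I (Set.Icc a b) := by
    refine Integrable.mono' ((integrableOn_const measure_Icc_lt_top.ne :
        IntegrableOn (fun _ => Cf * (M * Cg * (c * r))) (Set.Icc a b) volume))
      hIm.aestronglyMeasurable.restrict ?_
    rw [ae_restrict_iff' measurableSet_Icc]
    exact ae_of_all _ hIb
  have hlinint : IntegrableOn (fun u => F * (u - a)) (Set.Icc a b) :=
    (continuous_const.mul (continuous_id.sub continuous_const)).integrableOn_Icc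
  -- value of the linear integral
  have hlin : ∫ u in Set.Icc a b, F * (u - a) = F * ((c * r) ^ 2 / 2) := by
    rw [integral_Icc_eq_integral_Ioc, ← intervalIntegral.integral_of_le hab,
      intervalIntegral.integral_const_mul]
    have h1 : (∫ u in a..b, (u - a)) = (b - a) ^ 2 / 2 := by
      have h2 := intervalIntegral.integral_comp_sub_right (a := a) (b := b) (fun x => x) a
      rw [h2, sub_self, integral_id]
      ring
    rw [h1, hba]
  -- integrability of the norm differences
  have hfnorm : IntegrableOn (fun u => ‖f₁ u - f₁ t‖) (closedBall t (c * r)) :=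
    (hf₁i.integrableOn.sub ((integrableOn_const measure_closedBall_lt_top.ne :
      IntegrableOn (fun _ => f₁ t) (closedBall t (c * r)) volume))).norm
  have hgnorm : IntegrableOn (fun s => ‖g₁ s - g₁ t‖) (closedBall t (c * r)) :=
    (hg₁i.integrableOn.sub ((integrableOn_const measure_closedBall_lt_top.ne :
      IntegrableOn (fun _ => g₁ t) (closedBall t (c * r)) volume))).norm
  have hEgnn : 0 ≤ Eg := by
    rw [hEgdef]
    exact setIntegral_nonneg measurableSet_closedBall fun x _ => norm_nonneg _
  -- inner pointwise estimate
  have hInner : ∀ u ∈ Set.Icc a b,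
      ‖I u - F * (u - a)‖ ≤ ((c * r) * (M * Cg)) * ‖f₁ u - f₁ t‖
        + ((c * r) * (Cf * Cg * ε') + Cf * M * Eg) := by
    intro u hu
    have hau : a ≤ u := hu.1
    have huab : u - a ≤ c * r := by have := hu.2; linarith
    have hφm : Measurable (fun s => f₁ u * (K' (u, s) * g₁ s)) :=
      Measurable.const_mul (((hK'c.comp (Continuous.prodMk_right u)).measurable).mul hg₁m) _
    have hφb : ∀ s : ℝ, ‖f₁ u * (K' (u, s) * g₁ s)‖ ≤ Cf * (M * Cg) := by
      intro s
      rw [Real.norm_eq_abs, abs_mul, abs_mul]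
      refine mul_le_mul (hf₁b u) ?_ (by positivity) hCf
      exact mul_le_mul (hK'b _) (hg₁b _) (abs_nonneg _) hM
    have hφint : IntegrableOn (fun s => f₁ u * (K' (u, s) * g₁ s)) (Set.Icc a u) := by
      refine Integrable.mono' ((integrableOn_const measure_Icc_lt_top.ne :
        IntegrableOn (fun _ => Cf * (M * Cg)) (Set.Icc a u) volume))
        hφm.aestronglyMeasurable.restrict ?_
      exact ae_of_all _ fun s => hφb s
    have hconst : F * (u - a) = ∫ _ in Set.Icc a u, F := by
      rw [setIntegral_const, measureReal_def, Real.volume_Icc, ENNReal.toReal_ofReal (by linarith), smul_eq_mul]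
      ring
    have hIu : I u = ∫ s in Set.Icc a u, f₁ u * (K' (u, s) * g₁ s) := by
      rw [hIdef, hJdef]
      simp only
      rw [integral_const_mul]
    rw [hIu, hconst, ← integral_sub hφint (integrableOn_const measure_Icc_lt_top.ne)]
    have hB'int : IntegrableOn (fun s => (M * Cg) * ‖f₁ u - f₁ t‖ + Cf * Cg * ε'
        + Cf * M * ‖g₁ s - g₁ t‖) (Set.Icc a u) := by
      apply Integrable.add
      · exact integrableOn_const measure_Icc_lt_top.ne
      · exact ((hgnorm.mono_set fun x hx => hball ⟨hx.1, hx.2.trans hu.2⟩).const_mul (Cf * M))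
    have hptwise : ∀ s ∈ Set.Icc a u, ‖f₁ u * (K' (u, s) * g₁ s) - F‖
        ≤ (M * Cg) * ‖f₁ u - f₁ t‖ + Cf * Cg * ε' + Cf * M * ‖g₁ s - g₁ t‖ := by
      intro s hs
      have hsab : s ∈ Set.Icc a b := ⟨hs.1, hs.2.trans hu.2⟩
      have hdecomp : f₁ u * (K' (u, s) * g₁ s) - F
          = (f₁ u - f₁ t) * (K' (u, s) * g₁ s)
            + f₁ t * ((K' (u, s) - K' (t, t)) * g₁ s)
            + f₁ t * (K' (t, t) * (g₁ s - g₁ t)) := by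
        rw [hFeq]; ring
      rw [hdecomp]
      refine le_trans (norm_add_le _ _) ?_
      refine le_trans (add_le_add (norm_add_le _ _) le_rfl) ?_
      have h1 : ‖(f₁ u - f₁ t) * (K' (u, s) * g₁ s)‖ ≤ (M * Cg) * ‖f₁ u - f₁ t‖ := by
        rw [Real.norm_eq_abs, Real.norm_eq_abs, abs_mul, mul_comm ((M : ℝ) * Cg)]
        refine mul_le_mul_of_nonneg_left ?_ (abs_nonneg _)
        rw [abs_mul]
        exact mul_le_mul (hK'b _) (hg₁b _) (abs_nonneg _) hM
      have h2 : ‖f₁ t * ((K' (u, s) - K' (t, t)) * g₁ s)‖ ≤ Cf * Cg * ε' := by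
        calc ‖f₁ t * ((K' (u, s) - K' (t, t)) * g₁ s)‖
            = |f₁ t| * (|K' (u, s) - K' (t, t)| * |g₁ s|) := by
              rw [Real.norm_eq_abs, abs_mul, abs_mul]
          _ ≤ Cf * (ε' * Cg) := by
              refine mul_le_mul (hf₁b t) ?_ (by positivity) hCf
              exact mul_le_mul (hKclose u hu s hsab) (hg₁b s) (abs_nonneg _) hε'pos.le
          _ = Cf * Cg * ε' := by ring
      have h3 : ‖f₁ t * (K' (t, t) * (g₁ s - g₁ t))‖ ≤ Cf * M * ‖g₁ s - g₁ t‖ := by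
        calc ‖f₁ t * (K' (t, t) * (g₁ s - g₁ t))‖
            = |f₁ t| * (|K' (t, t)| * |g₁ s - g₁ t|) := by
              rw [Real.norm_eq_abs, abs_mul, abs_mul]
          _ ≤ Cf * (M * |g₁ s - g₁ t|) := by
              refine mul_le_mul (hf₁b t) ?_ (by positivity) hCf
              exact mul_le_mul_of_nonneg_right (hK'b _) (abs_nonneg _)
          _ = Cf * M * ‖g₁ s - g₁ t‖ := by rw [Real.norm_eq_abs]; ring
      exact add_le_add (add_le_add h1 h2) h3
    have hbound1 : ‖∫ s in Set.Icc a u, (f₁ u * (K' (u, s) * g₁ s) - F)‖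
        ≤ ∫ s in Set.Icc a u, ((M * Cg) * ‖f₁ u - f₁ t‖ + Cf * Cg * ε'
          + Cf * M * ‖g₁ s - g₁ t‖) := by
      apply norm_integral_le_of_norm_le hB'int
      rw [ae_restrict_iff' measurableSet_Icc]
      exact ae_of_all _ hptwise
    have hB'val : (∫ s in Set.Icc a u, ((M * Cg) * ‖f₁ u - f₁ t‖ + Cf * Cg * ε'
          + Cf * M * ‖g₁ s - g₁ t‖))
        = ((M * Cg) * ‖f₁ u - f₁ t‖ + Cf * Cg * ε') * (u - a)
          + Cf * M * ∫ s in Set.Icc a u, ‖g₁ s - g₁ t‖ := by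
      rw [integral_add (integrableOn_const measure_Icc_lt_top.ne :
            IntegrableOn (fun _ => (M * Cg) * ‖f₁ u - f₁ t‖ + Cf * Cg * ε') (Set.Icc a u) volume)
          ((hgnorm.mono_set fun x (hx : x ∈ Set.Icc a u) => hball ⟨hx.1, hx.2.trans hu.2⟩).const_mul (Cf * M) :
            IntegrableOn (fun s => Cf * M * ‖g₁ s - g₁ t‖) (Set.Icc a u) volume),
        setIntegral_const, integral_const_mul, measureReal_def, Real.volume_Icc,
        ENNReal.toReal_ofReal (by linarith), smul_eq_mul]
      ring
    have hgmono : (∫ s in Set.Icc a u, ‖g₁ s - g₁ t‖) ≤ Eg := by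
      rw [hEgdef]
      refine setIntegral_mono_set hgnorm
        (ae_of_all _ fun s => norm_nonneg _) ?_
      exact HasSubset.Subset.eventuallyLE fun x hx => hball ⟨hx.1, hx.2.trans hu.2⟩
    have hA : 0 ≤ (M * Cg) * ‖f₁ u - f₁ t‖ + Cf * Cg * ε' :=
      add_nonneg (mul_nonneg (mul_nonneg hM hCg) (norm_nonneg _))
        (mul_nonneg (mul_nonneg hCf hCg) hε'pos.le)
    calc ‖∫ s in Set.Icc a u, (f₁ u * (K' (u, s) * g₁ s) - F)‖
        ≤ ((M * Cg) * ‖f₁ u - f₁ t‖ + Cf * Cg * ε') * (u - a)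
          + Cf * M * ∫ s in Set.Icc a u, ‖g₁ s - g₁ t‖ := by rw [← hB'val]; exact hbound1
      _ ≤ ((M * Cg) * ‖f₁ u - f₁ t‖ + Cf * Cg * ε') * (c * r) + Cf * M * Eg :=
          add_le_add (mul_le_mul_of_nonneg_left huab hA)
            (mul_le_mul_of_nonneg_left hgmono (mul_nonneg hCf hM))
      _ = ((c * r) * (M * Cg)) * ‖f₁ u - f₁ t‖ + ((c * r) * (Cf * Cg * ε') + Cf * M * Eg) := by
          ring
  -- outer estimate
  have hBint : IntegrableOn (fun u => ((c * r) * (M * Cg)) * ‖f₁ u - f₁ t‖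
      + ((c * r) * (Cf * Cg * ε') + Cf * M * Eg)) (Set.Icc a b) := by
    apply Integrable.add
    · exact ((hfnorm.mono_set hball).const_mul _)
    · exact integrableOn_const measure_Icc_lt_top.ne
  have hOuter : ‖∫ u in Set.Icc a b, (I u - F * (u - a))‖
      ≤ ∫ u in Set.Icc a b, (((c * r) * (M * Cg)) * ‖f₁ u - f₁ t‖
        + ((c * r) * (Cf * Cg * ε') + Cf * M * Eg)) := by
    apply norm_integral_le_of_norm_le hBint
    rw [ae_restrict_iff' measurableSet_Icc]
    exact ae_of_all _ hInner
  have hBval : (∫ u in Set.Icc a b, (((c * r) * (M * Cg)) * ‖f₁ u - f₁ t‖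
        + ((c * r) * (Cf * Cg * ε') + Cf * M * Eg)))
      = ((c * r) * (M * Cg)) * (∫ u in Set.Icc a b, ‖f₁ u - f₁ t‖)
        + ((c * r) * (Cf * Cg * ε') + Cf * M * Eg) * (c * r) := by
    rw [integral_add ((hfnorm.mono_set hball).const_mul _)
        (integrableOn_const measure_Icc_lt_top.ne),
      integral_const_mul, setIntegral_const, measureReal_def, Real.volume_Icc,
      ENNReal.toReal_ofReal (by linarith), smul_eq_mul, hba]
    ring
  have hfmono : (∫ u in Set.Icc a b, ‖f₁ u - f₁ t‖) ≤ Ef := by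
    rw [hEfdef]
    refine setIntegral_mono_set hfnorm
      (ae_of_all _ fun s => norm_nonneg _) ?_
    exact HasSubset.Subset.eventuallyLE hball
  have hOuter2 : ‖∫ u in Set.Icc a b, (I u - F * (u - a))‖
      ≤ ((c * r) * (M * Cg)) * Ef + ((c * r) * (Cf * Cg * ε') + Cf * M * Eg) * (c * r) := by
    refine hOuter.trans ?_
    rw [hBval]
    refine add_le_add (mul_le_mul_of_nonneg_left hfmono ?_) le_rfl
    exact mul_nonneg hrc.le (mul_nonneg hM hCg)
  -- conclusion
  rw [Real.dist_eq]
  have hIcong2 : (∫ u in Set.Icc a b, ∫ s in Set.Icc a u, f u * K u s * g s)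
      = ∫ u in Set.Icc a b, I u := setIntegral_congr_fun measurableSet_Icc hcong
  rw [hIcong2]
  have hsplit : (1 / r ^ 2) * (∫ u in Set.Icc a b, I u) - c ^ 2 / 2 * F
      = (1 / r ^ 2) * ∫ u in Set.Icc a b, (I u - F * (u - a)) := by
    rw [integral_sub hIint hlinint, hlin]
    field_simp
  rw [hsplit]
  have hEfnn : 0 ≤ Ef := by
    rw [hEfdef]
    exact setIntegral_nonneg measurableSet_closedBall fun x _ => norm_nonneg _
  calc |(1 / r ^ 2) * ∫ u in Set.Icc a b, (I u - F * (u - a))|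
      = (1 / r ^ 2) * ‖∫ u in Set.Icc a b, (I u - F * (u - a))‖ := by
        rw [abs_mul, abs_of_pos (by positivity : (0:ℝ) < 1 / r ^ 2), Real.norm_eq_abs]
    _ ≤ (1 / r ^ 2) * (((c * r) * (M * Cg)) * Ef
        + ((c * r) * (Cf * Cg * ε') + Cf * M * Eg) * (c * r)) :=
        mul_le_mul_of_nonneg_left hOuter2 (by positivity)
    _ = c * (M * Cg) * ((1 / r) * Ef) + c ^ 2 * (Cf * Cg) * ε'
        + c * (Cf * M) * ((1 / r) * Eg) := by
        field_simp
        ring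
    _ < ε := by
        have t1 : c * (M * Cg) * ((1 / r) * Ef) ≤ c * (M * Cg) * ε' :=
          mul_le_mul_of_nonneg_left hrf.le (mul_nonneg hαβ.le (mul_nonneg hM hCg))
        have t3 : c * (Cf * M) * ((1 / r) * Eg) ≤ c * (Cf * M) * ε' :=
          mul_le_mul_of_nonneg_left hrg.le (mul_nonneg hαβ.le (mul_nonneg hCf hM))
        have hC₁ε : C₁ * ε' = ε := by
          rw [hε'def, mul_comm, div_mul_cancel₀ _ (ne_of_gt hC₁pos)]
        have hexp : c * (M * Cg) * ε' + c ^ 2 * (Cf * Cg) * ε' + c * (Cf * M) * ε'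
            = C₁ * ε' - ε' := by rw [hC₁def]; ring
        clear_value c f₁ g₁ K' M C₁ ε' a b F Ef Eg J I
        linarith
end
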